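/- For right-censored data with a single inspection time C (K=1, π₀=1, π₁=0), if T has continuous CDF F independent of C, the conditional second moment of the PSR given C equals v₀(C)·F(C)³ + F(C)(1 − F(C)), where v₀(C) = F(C)^{−3} ∫_{(0,C]} (2F(t) − F(C))² dF(t); in particular for continuous F this equals F(C)³/3 + F(C)(1 − F(C)). -/

import Mathlib

open MeasureTheory Filter

/-- Pushforward of a continuous Stieltjes measure restricted to `(0,c]` under `F` is
Lebesgue measure on `(0, F c]`, assuming `F 0 = 0`. -/
lemma stieltjes_map_restrict (F : StieltjesFunction ℝ) (hcont : Continuous F) (hF0 : F 0 = 0)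
    (c : ℝ) (hc : 0 ≤ c) :
    Measure.map F (F.measure.restrict (Set.Ioc 0 c)) = volume.restrict (Set.Ioc 0 (F c)) := by
  have hmeas : Measurable F := hcont.measurable
  have hFc0 : 0 ≤ F c := hF0 ▸ F.mono hc
  haveI : IsFiniteMeasure (F.measure.restrict (Set.Ioc 0 c)) := by
    constructor
    rw [Measure.restrict_apply_univ, F.measure_Ioc]
    exact ENNReal.ofReal_lt_top
  haveI : IsFiniteMeasure (Measure.map F (F.measure.restrict (Set.Ioc 0 c))) :=
    Measure.isFiniteMeasure_map _ _
  haveI : IsFiniteMeasure (volume.restrict (Set.Ioc 0 (F c))) := by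
    constructor
    rw [Measure.restrict_apply_univ, Real.volume_Ioc]
    exact ENNReal.ofReal_lt_top
  refine Measure.ext_of_Iic _ _ (fun x => ?_)
  rw [Measure.map_apply hmeas measurableSet_Iic,
    Measure.restrict_apply (hmeas measurableSet_Iic),
    Measure.restrict_apply measurableSet_Iic]
  rcases lt_or_ge x 0 with hx | hx
  · have h1 : F ⁻¹' Set.Iic x ∩ Set.Ioc 0 c = ∅ := by
      ext t
      simp only [Set.mem_inter_iff, Set.mem_preimage, Set.mem_Iic, Set.mem_Ioc,
        Set.mem_empty_iff_false, iff_false, not_and, and_imp]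
      intro hFt ht0
      exact absurd hFt (not_le.2 (lt_of_lt_of_le hx (hF0 ▸ F.mono ht0.le)))
    have h2 : Set.Iic x ∩ Set.Ioc 0 (F c) = ∅ := by
      ext u
      simp only [Set.mem_inter_iff, Set.mem_Iic, Set.mem_Ioc, Set.mem_empty_iff_false,
        iff_false, not_and, and_imp]
      intro hu hu0
      exact absurd hu (not_le.2 (lt_of_lt_of_le hx hu0.le))
    rw [h1, h2]
    simp
  · -- x ≥ 0
    set A : Set ℝ := {t | F t ≤ x} ∩ Set.Icc 0 c with hA
    have hAne : A.Nonempty := ⟨0, by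
      simp only [hA, Set.mem_inter_iff, Set.mem_setOf_eq, Set.mem_Icc]
      exact ⟨by rw [hF0]; exact hx, le_rfl, hc⟩⟩
    have hAclosed : IsClosed A :=
      ((isClosed_le hcont continuous_const).inter isClosed_Icc)
    have hAbdd : BddAbove A := ⟨c, fun t ht => ht.2.2⟩
    set s := sSup A with hs
    have hsA : s ∈ A := hAclosed.csSup_mem hAne hAbdd
    have hs0 : 0 ≤ s := hsA.2.1
    have hsc : s ≤ c := hsA.2.2
    have hFs_le : F s ≤ x := hsA.1
    have hset : F ⁻¹' Set.Iic x ∩ Set.Ioc 0 c = Set.Ioc 0 s := by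
      ext t
      simp only [Set.mem_inter_iff, Set.mem_preimage, Set.mem_Iic, Set.mem_Ioc]
      constructor
      · rintro ⟨hFt, ht0, htc⟩
        exact ⟨ht0, le_csSup hAbdd ⟨hFt, ht0.le, htc⟩⟩
      · rintro ⟨ht0, hts⟩
        exact ⟨le_trans (F.mono hts) hFs_le, ht0, le_trans hts hsc⟩
    have hFs : F s = min x (F c) := by
      rcases le_or_gt (F c) x with h | h
      · have hcs : c ≤ s := le_csSup hAbdd ⟨h, hc, le_rfl⟩
        have : s = c := le_antisymm hsc hcs
        rw [this, min_eq_right h]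
      · -- x < F c, IVT gives t with F t = x
        obtain ⟨t, htIcc, hFt⟩ := intermediate_value_Icc hc hcont.continuousOn
          (Set.mem_Icc.2 ⟨by rw [hF0]; exact hx, h.le⟩)
        have hts : t ≤ s := le_csSup hAbdd ⟨hFt.le, htIcc⟩
        have : x ≤ F s := hFt ▸ F.mono hts
        rw [min_eq_left h.le]
        exact le_antisymm hFs_le this
    have hIic : Set.Iic x ∩ Set.Ioc 0 (F c) = Set.Ioc 0 (min x (F c)) := by
      ext u
      simp only [Set.mem_inter_iff, Set.mem_Iic, Set.mem_Ioc, lt_min_iff, le_min_iff]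
      constructor
      · rintro ⟨h1, h2, h3⟩; exact ⟨h2, h1, h3⟩
      · rintro ⟨h1, h2, h3⟩; exact ⟨h2, h1, h3⟩
    rw [hset, hIic, F.measure_Ioc, Real.volume_Ioc, hF0, hFs, sub_zero]

/-- Change of variables: integrating `g ∘ F` on `(0,c]` against `F.measure` equals
integrating `g` on `(0, F c]` against Lebesgue measure. -/
lemma stieltjes_integral_comp (F : StieltjesFunction ℝ) (hcont : Continuous F) (hF0 : F 0 = 0)
    (c : ℝ) (hc : 0 ≤ c) (g : ℝ → ℝ) (hg : Continuous g) :
    ∫ t in Set.Ioc 0 c, g (F t) ∂F.measure = ∫ u in Set.Ioc 0 (F c), g u := by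
  calc ∫ t in Set.Ioc 0 c, g (F t) ∂F.measure
      = ∫ u, g u ∂(Measure.map F (F.measure.restrict (Set.Ioc 0 c))) :=
        (integral_map hcont.measurable.aemeasurable hg.aestronglyMeasurable).symm
    _ = ∫ u in Set.Ioc 0 (F c), g u := by
        rw [stieltjes_map_restrict F hcont hF0 c hc]

lemma integral_sq_poly (a b : ℝ) :
    ∫ u in (0:ℝ)..b, (2 * u - a) ^ 2 = ((2 * b - a) ^ 3 + a ^ 3) / 6 := by
  have hderiv : ∀ x ∈ Set.uIcc (0:ℝ) b,
      HasDerivAt (fun u : ℝ => (2 * u - a) ^ 3 / 6) ((2 * x - a) ^ 2) x := by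
    intro x _
    have h1 : HasDerivAt (fun u : ℝ => 2 * u - a) 2 x := by
      simpa using ((hasDerivAt_id x).const_mul 2).sub_const a
    have h2 := (h1.pow 3).div_const 6
    exact h2.congr_deriv (by norm_num <;> ring)
  have hint : IntervalIntegrable (fun x : ℝ => (2 * x - a) ^ 2) volume 0 b :=
    (by continuity : Continuous fun x : ℝ => (2 * x - a) ^ 2).intervalIntegrable 0 b
  rw [intervalIntegral.integral_eq_sub_of_hasDerivAt hderiv hint]
  ring

/-- Right-censored data with a single inspection time `C = c`: if `T` has continuous
CDF `F`, the conditional second moment of the PSR given `C = c` equals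
`v₀(c)·F(c)³ + F(c)(1 − F(c))` with `v₀(c) = F(c)^{−3} ∫_{(0,c]} (2F(t) − F(c))² dF(t)`,
and for continuous `F` this equals `F(c)³/3 + F(c)(1 − F(c))`. -/
theorem psr_right_censored_second_moment {Ω : Type*} [MeasurableSpace Ω]
    (μ : Measure Ω) [IsProbabilityMeasure μ]
    (F : StieltjesFunction ℝ) (hcont : Continuous F) (hF0 : F 0 = 0)
    (hFtop : Tendsto F atTop (nhds 1))
    (T : Ω → ℝ) (hT : Measurable T) (hTpos : ∀ ω, 0 < T ω)
    (hlaw : μ.map T = F.measure)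
    (c : ℝ) (hc : 0 < c) :
    (∫ ω, (if T ω ≤ c then 2 * F (T ω) - 1 else F c) ^ 2 ∂μ
        = ((∫ t in Set.Ioc 0 c, (2 * F t - F c) ^ 2 ∂F.measure) / (F c) ^ 3) * (F c) ^ 3
            + F c * (1 - F c)) ∧
    ∫ ω, (if T ω ≤ c then 2 * F (T ω) - 1 else F c) ^ 2 ∂μ
      = (F c) ^ 3 / 3 + F c * (1 - F c) := by
  have hmeas : Measurable F := hcont.measurable
  set a := F c with ha
  have ha0 : 0 ≤ a := hF0 ▸ F.mono hc.le
  have ha1 : a ≤ 1 := F.mono.ge_of_tendsto hFtop c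
  haveI hprob : IsProbabilityMeasure F.measure := by
    rw [← hlaw]; exact Measure.isProbabilityMeasure_map hT.aemeasurable
  set f : ℝ → ℝ := fun t => (if t ≤ c then 2 * F t - 1 else a) ^ 2 with hf
  have hfmeas : Measurable f :=
    (Measurable.ite measurableSet_Iic
      ((measurable_const.mul hmeas).sub measurable_const) measurable_const).pow measurable_const
  -- lower and upper bounds for F
  have hFub : ∀ t, F t ≤ 1 := fun t => F.mono.ge_of_tendsto hFtop t
  have hFlb : ∀ t, -1 ≤ F t := by
    intro t
    by_contra h
    push_neg at h
    have h1 : F.measure (Set.Ioc t 0) ≤ 1 := prob_le_one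
    rw [F.measure_Ioc, hF0] at h1
    have h2 : (0 : ℝ) - F t ≤ 1 := ENNReal.ofReal_le_one.1 h1
    linarith
  -- integrability
  have hfbound : ∀ t, ‖f t‖ ≤ 9 := by
    intro t
    rw [hf]
    simp only [Real.norm_eq_abs]
    rw [abs_of_nonneg (sq_nonneg _)]
    split_ifs
    · nlinarith [hFlb t, hFub t]
    · nlinarith
  have hfint : Integrable f F.measure :=
    (integrable_const (9:ℝ)).mono' hfmeas.aestronglyMeasurable
      (Filter.Eventually.of_forall hfbound)
  -- step 1: change to F.measure
  have h1 : ∫ ω, f (T ω) ∂μ = ∫ t, f t ∂F.measure := by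
    rw [← hlaw, integral_map hT.aemeasurable hfmeas.aestronglyMeasurable]
  -- measure facts
  have hIic0 : F.measure (Set.Iic 0) = 0 := by
    rw [← hlaw, Measure.map_apply hT measurableSet_Iic]
    have : T ⁻¹' Set.Iic 0 = ∅ := by
      ext ω; simp [not_le.2 (hTpos ω)]
    rw [this, measure_empty]
  have hIicc : F.measure (Set.Iic c) = ENNReal.ofReal a := by
    have hdisj : Disjoint (Set.Iic 0) (Set.Ioc 0 c) := by
      rw [Set.disjoint_iff]
      rintro t ⟨h1, h2, _⟩
      exact absurd h1 (not_le.2 h2)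
    have hunion : Set.Iic c = Set.Iic 0 ∪ Set.Ioc 0 c := by
      ext t
      simp only [Set.mem_Iic, Set.mem_union, Set.mem_Ioc]
      constructor
      · intro h
        rcases le_or_gt t 0 with h' | h'
        · exact Or.inl h'
        · exact Or.inr ⟨h', h⟩
      · rintro (h | ⟨_, h⟩)
        · exact le_trans h hc.le
        · exact h
    rw [hunion, measure_union hdisj (measurableSet_Ioc), hIic0, zero_add,
      F.measure_Ioc, hF0, sub_zero]
  have hIoic : F.measure (Set.Ioi c) = 1 - ENNReal.ofReal a := by
    rw [← Set.compl_Iic, measure_compl measurableSet_Iic (measure_ne_top _ _), hIicc, measure_univ]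
  -- restrict equality: Iic c ~ Ioc 0 c
  have hrestr : F.measure.restrict (Set.Iic c) = F.measure.restrict (Set.Ioc 0 c) := by
    apply Measure.restrict_congr_set
    rw [MeasureTheory.ae_eq_set]
    constructor
    · have hsub : Set.Iic c \ Set.Ioc 0 c ⊆ Set.Iic 0 := by
        rintro t ⟨h1, h2⟩
        simp only [Set.mem_Ioc, not_and, not_le] at h2
        rcases le_or_gt t 0 with h | h
        · exact h
        · exact absurd h1 (not_le.2 (h2 h))
      exact measure_mono_null hsub hIic0
    · have : Set.Ioc 0 c \ Set.Iic c = ∅ := by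
        ext t
        simp only [Set.mem_diff, Set.mem_Ioc, Set.mem_Iic, Set.mem_empty_iff_false, iff_false,
          not_and, and_imp]
        intro _ h h'
        exact h' h
      rw [this, measure_empty]
  -- split the integral
  have hsplit : ∫ t, f t ∂F.measure
      = ∫ t in Set.Iic c, f t ∂F.measure + ∫ t in Set.Ioi c, f t ∂F.measure := by
    rw [← Set.compl_Iic]
    exact (integral_add_compl measurableSet_Iic hfint).symm
  -- uncensored piece
  have hA : ∫ t in Set.Iic c, f t ∂F.measure
      = ∫ u in Set.Ioc 0 a, (2 * u - 1) ^ 2 := by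
    rw [hrestr]
    have hcongr : ∀ t ∈ Set.Ioc 0 c, f t = (2 * F t - 1) ^ 2 := by
      intro t ht
      rw [hf]
      simp [ht.2]
    rw [setIntegral_congr_fun measurableSet_Ioc hcongr]
    exact stieltjes_integral_comp F hcont hF0 c hc.le (fun u => (2 * u - 1) ^ 2)
      (by continuity)
  -- censored piece
  have hB : ∫ t in Set.Ioi c, f t ∂F.measure = a ^ 2 * (1 - a) := by
    have hcongr : ∀ t ∈ Set.Ioi c, f t = a ^ 2 := by
      intro t ht
      rw [hf]
      simp [not_le.2 (Set.mem_Ioi.1 ht)]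
    rw [setIntegral_congr_fun measurableSet_Ioi hcongr, setIntegral_const, measureReal_def, hIoic, smul_eq_mul,
      mul_comm]
    congr 1
    rw [ENNReal.toReal_sub_of_le (by simpa using ha1) (by simp), ENNReal.toReal_one,
      ENNReal.toReal_ofReal ha0]
  -- evaluate the polynomial integrals
  have hEvalA : ∫ u in Set.Ioc 0 a, (2 * u - 1) ^ 2 = 4 * a ^ 3 / 3 - 2 * a ^ 2 + a := by
    rw [← intervalIntegral.integral_of_le ha0, integral_sq_poly 1 a]
    ring
  have hJ : ∫ t in Set.Ioc 0 c, (2 * F t - a) ^ 2 ∂F.measure = a ^ 3 / 3 := by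
    rw [stieltjes_integral_comp F hcont hF0 c hc.le (fun u => (2 * u - a) ^ 2) (by continuity),
      ← intervalIntegral.integral_of_le ha0, integral_sq_poly a a]
    ring
  have hmain : ∫ ω, f (T ω) ∂μ = a ^ 3 / 3 + a * (1 - a) := by
    rw [h1, hsplit, hA, hB, hEvalA]
    ring
  refine ⟨?_, hmain⟩
  rw [hmain, hJ]
  rcases eq_or_ne a 0 with h | h
  · rw [h]; ring_nf
  · rw [div_mul_cancel₀ _ (pow_ne_zero 3 h)]
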